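/- Let T[ρ] = Σ_k M_k ρ M_k† be a TPCP map with M_{k,Q}=0 for all k (so H_S is invariant), let Π_R be the orthogonal projection onto H_R, and define V(ρ) = Tr(Π_R ρ). Then for every density operator ρ, V(T[ρ]) − V(ρ) = Tr(Σ_k M_{k,R} ρ_R M_{k,R}†) − Tr(ρ_R) ≤ 0, where ρ_R = Π_R ρ Π_R restricted to H_R. In particular V is non-increasing along trajectories of the iterated map. -/

import Mathlib

open Matrix Finset
open scoped ComplexOrder

lemma my_trace_fromBlocks {n o : Type*} [Fintype n] [Fintype o]
    (A : Matrix n n ℂ) (B : Matrix n o ℂ) (C : Matrix o n ℂ) (D : Matrix o o ℂ) :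
    (Matrix.fromBlocks A B C D).trace = A.trace + D.trace := by
  simp [Matrix.trace, Fintype.sum_sum_type, Matrix.diag, Matrix.fromBlocks]

lemma my_trace_nonneg {n : Type*} [Fintype n] [DecidableEq n] {A : Matrix n n ℂ} (hA : A.PosSemidef) :
    0 ≤ A.trace := by
  apply Finset.sum_nonneg
  intro i _
  exact hA.diag_nonneg

lemma my_trace_mul_nonneg {n : Type*} [Fintype n] [DecidableEq n]
    {A B : Matrix n n ℂ} (hA : A.PosSemidef) (hB : B.PosSemidef) :
    0 ≤ (A * B).trace := by
  obtain ⟨C, rfl⟩ : ∃ C : Matrix n n ℂ, A = Cᴴ * C := by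
    open scoped MatrixOrder in
    obtain ⟨C, hC⟩ := CStarAlgebra.nonneg_iff_eq_star_mul_self.mp hA.nonneg
    exact ⟨C, hC⟩
  rw [Matrix.mul_assoc, Matrix.trace_mul_comm]
  exact my_trace_nonneg (hB.mul_mul_conjTranspose_same C)

theorem lyapunov_nonincreasing
    (m r K : ℕ)
    (M : Fin K → Matrix (Fin m ⊕ Fin r) (Fin m ⊕ Fin r) ℂ)
    (hTP : ∑ k, (M k)ᴴ * M k = 1)
    (hQ : ∀ k, (M k).toBlocks₂₁ = 0)
    (ρ : Matrix (Fin m ⊕ Fin r) (Fin m ⊕ Fin r) ℂ)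
    (hρ : ρ.PosSemidef) (htr : ρ.trace = 1) :
    (Matrix.fromBlocks 0 0 0 (1 : Matrix (Fin r) (Fin r) ℂ) *
          (∑ k, M k * ρ * (M k)ᴴ)).trace -
        (Matrix.fromBlocks 0 0 0 (1 : Matrix (Fin r) (Fin r) ℂ) * ρ).trace =
      (∑ k, (M k).toBlocks₂₂ * ρ.toBlocks₂₂ * ((M k).toBlocks₂₂)ᴴ).trace -
        (ρ.toBlocks₂₂).trace ∧
    (Matrix.fromBlocks 0 0 0 (1 : Matrix (Fin r) (Fin r) ℂ) *
          (∑ k, M k * ρ * (M k)ᴴ)).trace -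
        (Matrix.fromBlocks 0 0 0 (1 : Matrix (Fin r) (Fin r) ℂ) * ρ).trace ≤ 0 := by
  -- trace of Π_R * X
  have key1 : ∀ X : Matrix (Fin m ⊕ Fin r) (Fin m ⊕ Fin r) ℂ,
      (Matrix.fromBlocks 0 0 0 (1 : Matrix (Fin r) (Fin r) ℂ) * X).trace =
        (X.toBlocks₂₂).trace := by
    intro X
    conv_lhs => rw [← Matrix.fromBlocks_toBlocks X]
    rw [Matrix.fromBlocks_multiply, my_trace_fromBlocks]
    simp
  -- per-term block computation
  have key2 : ∀ k, (M k * ρ * (M k)ᴴ).toBlocks₂₂ =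
      (M k).toBlocks₂₂ * ρ.toBlocks₂₂ * ((M k).toBlocks₂₂)ᴴ := by
    intro k
    have hM : M k = Matrix.fromBlocks (M k).toBlocks₁₁ (M k).toBlocks₁₂ 0 (M k).toBlocks₂₂ := by
      rw [← hQ k, Matrix.fromBlocks_toBlocks]
    conv_lhs => rw [hM, ← Matrix.fromBlocks_toBlocks ρ]
    rw [Matrix.fromBlocks_conjTranspose, Matrix.fromBlocks_multiply,
      Matrix.fromBlocks_multiply, Matrix.toBlocks_fromBlocks₂₂]
    simp [Matrix.mul_assoc]
  have hblocksum : ∀ (f : Fin K → Matrix (Fin m ⊕ Fin r) (Fin m ⊕ Fin r) ℂ),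
      (∑ k, f k).toBlocks₂₂ = ∑ k, (f k).toBlocks₂₂ := by
    intro f
    ext i j
    simp [Matrix.toBlocks₂₂, Matrix.sum_apply]
  have hsum22 : (∑ k, M k * ρ * (M k)ᴴ).toBlocks₂₂ =
      ∑ k, (M k).toBlocks₂₂ * ρ.toBlocks₂₂ * ((M k).toBlocks₂₂)ᴴ := by
    rw [hblocksum]
    exact Finset.sum_congr rfl fun k _ => key2 k
  have heq : (Matrix.fromBlocks 0 0 0 (1 : Matrix (Fin r) (Fin r) ℂ) *
          (∑ k, M k * ρ * (M k)ᴴ)).trace -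
        (Matrix.fromBlocks 0 0 0 (1 : Matrix (Fin r) (Fin r) ℂ) * ρ).trace =
      (∑ k, (M k).toBlocks₂₂ * ρ.toBlocks₂₂ * ((M k).toBlocks₂₂)ᴴ).trace -
        (ρ.toBlocks₂₂).trace := by
    rw [key1, key1, hsum22]
  refine ⟨heq, ?_⟩
  rw [heq]
  have h22k : ∀ k, ((M k)ᴴ * M k).toBlocks₂₂ = ((M k).toBlocks₁₂)ᴴ * (M k).toBlocks₁₂ +
      ((M k).toBlocks₂₂)ᴴ * (M k).toBlocks₂₂ := by
    intro k
    have hM : M k = Matrix.fromBlocks (M k).toBlocks₁₁ (M k).toBlocks₁₂ 0 (M k).toBlocks₂₂ := by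
      rw [← hQ k, Matrix.fromBlocks_toBlocks]
    conv_lhs => rw [hM]
    rw [Matrix.fromBlocks_conjTranspose, Matrix.fromBlocks_multiply,
      Matrix.toBlocks_fromBlocks₂₂]
  have hTP22 : ∑ k, (((M k).toBlocks₁₂)ᴴ * (M k).toBlocks₁₂ +
      ((M k).toBlocks₂₂)ᴴ * (M k).toBlocks₂₂) = 1 := by
    have h := congrArg Matrix.toBlocks₂₂ hTP
    rw [show (1 : Matrix (Fin m ⊕ Fin r) (Fin m ⊕ Fin r) ℂ) =
        Matrix.fromBlocks 1 0 0 1 from (Matrix.fromBlocks_one).symm,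
      Matrix.toBlocks_fromBlocks₂₂, hblocksum] at h
    rw [← h]
    exact Finset.sum_congr rfl fun k _ => (h22k k).symm
  have hρR : (ρ.toBlocks₂₂).PosSemidef := hρ.submatrix Sum.inr
  have htrace_eq : (∑ k, (M k).toBlocks₂₂ * ρ.toBlocks₂₂ * ((M k).toBlocks₂₂)ᴴ).trace =
      ((∑ k, ((M k).toBlocks₂₂)ᴴ * (M k).toBlocks₂₂) * ρ.toBlocks₂₂).trace := by
    rw [Matrix.trace_sum, Finset.sum_mul, Matrix.trace_sum]
    apply Finset.sum_congr rfl
    intro k _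
    rw [Matrix.trace_mul_cycle]
  rw [htrace_eq, sub_nonpos]
  have hBsum : ((∑ k, ((M k).toBlocks₁₂)ᴴ * (M k).toBlocks₁₂)).PosSemidef := by
    refine Finset.sum_induction _ _ (fun a b ha hb => ha.add hb) ?_ ?_
    · exact Matrix.PosSemidef.zero
    · exact fun k _ => Matrix.posSemidef_conjTranspose_mul_self _
  have hsplit : (∑ k, ((M k).toBlocks₂₂)ᴴ * (M k).toBlocks₂₂) =
      1 - ∑ k, ((M k).toBlocks₁₂)ᴴ * (M k).toBlocks₁₂ := by
    rw [← hTP22, Finset.sum_add_distrib]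
    abel
  rw [hsplit, Matrix.sub_mul, Matrix.one_mul, Matrix.trace_sub, sub_le_iff_le_add,
    le_add_iff_nonneg_right]
  exact my_trace_mul_nonneg hBsum hρR
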